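/- There is a constant C depending only on g, k, and the local dimension d with the following property. Let H be a k-local Hamiltonian with interaction strength g on the N-spin system, with ground energy 0, unique normalized ground state |Ω⟩, and spectral gap δE > 0. Then for every subset of spins L with δE ≤ g|L| and every spin i outside L, the two-spin reduced density matrices of |Ω⟩ satisfy ∑_{j∈L} ‖ρ_{ij} − ρ_i ⊗ ρ_j‖ ≤ C·√(|L|/δE). -/

import Mathlib

noncomputable section

open scoped ComplexConjugate

/-- The Hilbert space of `N` spins, each of local dimension `d`:
the `N`-fold tensor product `⊗ ℂ^d`, realized as the space with orthonormal
basis indexed by configurations `Fin N → Fin d`. -/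
abbrev SpinSpace (N d : ℕ) : Type := EuclideanSpace ℂ (Fin N → Fin d)

/-- Operators on the spin system. -/
abbrev SpinOp (N d : ℕ) : Type := SpinSpace N d →L[ℂ] SpinSpace N d

variable {N d : ℕ}

/-- The standard (computational) basis vector labelled by a configuration. -/
def basisVec (f : Fin N → Fin d) : SpinSpace N d := EuclideanSpace.single f 1

/-- The matrix entry `⟨f| A |g⟩` of an operator in the computational basis. -/
def matEntry (A : SpinOp N d) (f g : Fin N → Fin d) : ℂ :=
  inner ℂ (basisVec f) (A (basisVec g))

/-- `A` is supported on the subset `X` of spins: under the tensor factorization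
`ℋ ≅ ℋ_X ⊗ ℋ_{Xᶜ}` it has the form `o ⊗ I`.  Concretely: matrix entries vanish
unless the two configurations agree outside `X`, and entries depend only on the
restrictions of the configurations to `X`. -/
def SupportedOn (X : Finset (Fin N)) (A : SpinOp N d) : Prop :=
  (∀ f g : Fin N → Fin d, (∃ i, i ∉ X ∧ f i ≠ g i) → matEntry A f g = 0) ∧
  (∀ f g f' g' : Fin N → Fin d,
      (∀ i ∈ X, f i = f' i) → (∀ i ∈ X, g i = g' i) →
      (∀ i, i ∉ X → f i = g i) → (∀ i, i ∉ X → f' i = g' i) →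
      matEntry A f g = matEntry A f' g')

/-- A `q`-local operator: a sum of operators, each supported on at most `q` spins. -/
def IsLocalOp (q : ℕ) (A : SpinOp N d) : Prop :=
  ∃ (n : ℕ) (X : Fin n → Finset (Fin N)) (o : Fin n → SpinOp N d),
    (∀ t, (X t).card ≤ q ∧ SupportedOn (X t) (o t)) ∧ A = ∑ t, o t

/-- A `k`-local Hamiltonian with interaction strength `g`: a sum of Hermitian
terms, each supported on at most `k` spins, such that for every spin the total
norm of the terms acting on it is at most `g`. -/
def IsKLocalHamiltonian (k : ℕ) (g : ℝ) (H : SpinOp N d) : Prop :=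
  ∃ (n : ℕ) (X : Fin n → Finset (Fin N)) (h : Fin n → SpinOp N d),
    (∀ t, (X t).card ≤ k ∧ SupportedOn (X t) (h t) ∧ IsSelfAdjoint (h t)) ∧
    (∀ i : Fin N, ∑ t ∈ Finset.univ.filter (fun t => i ∈ X t), ‖h t‖ ≤ g) ∧
    H = ∑ t, h t

/-- An additive operator `A = ∑_{i ∈ L} a_i`, each `a_i` Hermitian, supported on
the single spin `i`, with `‖a_i‖ ≤ 1`. -/
def IsAdditiveOn (L : Finset (Fin N)) (a : Fin N → SpinOp N d) (A : SpinOp N d) : Prop :=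
  (∀ i ∈ L, SupportedOn {i} (a i) ∧ IsSelfAdjoint (a i) ∧ ‖a i‖ ≤ 1) ∧
  A = ∑ i ∈ L, a i

/-- The span of all eigenvectors of `A` whose (real) eigenvalue satisfies `P`. -/
def eigSpan (A : SpinOp N d) (P : ℝ → Prop) : Submodule ℂ (SpinSpace N d) :=
  ⨆ (a : ℝ) (_ : P a), Module.End.eigenspace (A : SpinSpace N d →ₗ[ℂ] SpinSpace N d) (a : ℂ)

/-- Spectral projector of `A` onto the eigenvalues satisfying `P` (the orthogonal
projection onto the span of the corresponding eigenvectors). -/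
def specProj (A : SpinOp N d) (P : ℝ → Prop) : SpinOp N d :=
  (eigSpan A P).subtypeL.comp (Submodule.orthogonalProjectionOnto (eigSpan A P))

/-- `m` is a median of `A` in the state `ψ`. -/
def IsMedian (A : SpinOp N d) (ψ : SpinSpace N d) (m : ℝ) : Prop :=
  (1:ℝ)/2 ≤ (inner ℂ ψ ((specProj A (fun a => a ≤ m)) ψ) : ℂ).re ∧
  (1:ℝ)/2 ≤ (inner ℂ ψ ((specProj A (fun a => m ≤ a)) ψ) : ℂ).re

/-- The state `ψ` satisfies the local-reversibility bound with function `f`. -/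
def SatisfiesLR (f : ℝ → ℝ) (ψ : SpinSpace N d) : Prop :=
  ∀ (L : Finset (Fin N)) (Γ : SpinOp N d), SupportedOn L Γ →
    (inner ℂ ψ (Γ ψ) : ℂ) ≠ 0 →
    ∀ q : ℕ, 0 < q →
      ∃ R : SpinOp N d, IsLocalOp q R ∧
        ‖R (Γ ψ) - ψ‖ ≤ ‖Γ‖ / ‖(inner ℂ ψ (Γ ψ) : ℂ)‖ * f ((q : ℝ) / Real.sqrt (L.card))

/-- `H` has ground energy `0` with unique normalized ground state `Ω` and spectral
gap (at least) `δE`: `Ω` is a null state, every null state is proportional to `Ω`,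
and on the orthogonal complement of `Ω` the energy is at least `δE`. -/
def IsGappedGround (H : SpinOp N d) (Ω : SpinSpace N d) (δE : ℝ) : Prop :=
  ‖Ω‖ = 1 ∧ H Ω = 0 ∧
  (∀ φ : SpinSpace N d, H φ = 0 → ∃ c : ℂ, φ = c • Ω) ∧
  (∀ φ : SpinSpace N d, (inner ℂ Ω φ : ℂ) = 0 → δE * ‖φ‖ ^ 2 ≤ (inner ℂ φ (H φ) : ℂ).re)

/-- One-spin reduced density matrix of `ψ` on spin `i` (partial trace of
`|ψ⟩⟨ψ|` over all other spins), in the computational basis. -/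
def rdm1 (ψ : SpinSpace N d) (i : Fin N) : Matrix (Fin d) (Fin d) ℂ :=
  Matrix.of fun s s' => ∑ f : Fin N → Fin d,
    if f i = s' then ψ (Function.update f i s) * conj (ψ f) else 0

/-- Two-spin reduced density matrix of `ψ` on spins `i` and `j`. -/
def rdm2 (ψ : SpinSpace N d) (i j : Fin N) :
    Matrix (Fin d × Fin d) (Fin d × Fin d) ℂ :=
  Matrix.of fun p p' => ∑ f : Fin N → Fin d,
    if f i = p'.1 ∧ f j = p'.2 then
      ψ (Function.update (Function.update f i p.1) j p.2) * conj (ψ f) else 0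

/-- The operator norm of a (finite) square matrix, i.e. the norm of the induced
operator on the corresponding Euclidean space. -/
def matOpNorm {ι : Type*} [Fintype ι] [DecidableEq ι] (M : Matrix ι ι ℂ) : ℝ :=
  ‖Matrix.toEuclideanCLM (𝕜 := ℂ) M‖

open scoped Matrix

lemma matEntry_eq (A : SpinOp N d) (f g : Fin N → Fin d) :
    matEntry A f g = (A (basisVec g)) f := by
  simp [matEntry, basisVec, EuclideanSpace.inner_single_left]

lemma euclid_decomp (ψ : SpinSpace N d) : ψ = ∑ f, ψ f • basisVec f := by
  apply PiLp.ext
  intro g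
  have : (∑ f, ψ f • basisVec f) g = ∑ f, ψ f * (basisVec f g) := by
    rw [WithLp.ofLp_sum, Finset.sum_apply]; simp [PiLp.smul_apply]
  rw [this]
  simp [basisVec, EuclideanSpace.single_apply]

lemma clm_ext_of_matEntry {A B : SpinOp N d}
    (h : ∀ f g, matEntry A f g = matEntry B f g) : A = B := by
  apply ContinuousLinearMap.ext
  intro ψ
  rw [euclid_decomp ψ, map_sum, map_sum]
  refine Finset.sum_congr rfl fun g _ => ?_
  rw [map_smul, map_smul]
  congr 1
  apply PiLp.ext
  intro f
  rw [← matEntry_eq, ← matEntry_eq, h]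

lemma matEntry_mul (A B : SpinOp N d) (f g : Fin N → Fin d) :
    matEntry (A * B) f g = ∑ h, matEntry A f h * matEntry B h g := by
  rw [matEntry_eq]
  show (A (B (basisVec g))) f = _
  conv_lhs => rw [euclid_decomp (B (basisVec g))]
  rw [map_sum, WithLp.ofLp_sum, Finset.sum_apply]
  refine Finset.sum_congr rfl fun h _ => ?_
  rw [map_smul, PiLp.smul_apply, ← matEntry_eq, ← matEntry_eq, smul_eq_mul]
  ring

lemma commute_of_disjoint_support {X Y : Finset (Fin N)} {A B : SpinOp N d}
    (hA : SupportedOn X A) (hB : SupportedOn Y B) (hXY : Disjoint X Y) :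
    A * B = B * A := by
  have hXY' : ∀ i : Fin N, i ∈ X → i ∉ Y := fun i hi => Finset.disjoint_left.mp hXY hi
  apply clm_ext_of_matEntry
  intro f g
  rw [matEntry_mul, matEntry_mul]
  by_cases hfg : ∀ i, i ∉ X → i ∉ Y → f i = g i
  · set h₀ : Fin N → Fin d := fun i => if i ∈ X then g i else f i with hh₀
    set h₁ : Fin N → Fin d := fun i => if i ∈ Y then g i else f i with hh₁
    have s1 : ∑ h, matEntry A f h * matEntry B h g = matEntry A f h₀ * matEntry B h₀ g := by
      apply Finset.sum_eq_single h₀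
      · intro h _ hne
        obtain ⟨i, hi⟩ := Function.ne_iff.mp hne
        by_cases hiX : i ∈ X
        · have : matEntry B h g = 0 := by
            refine hB.1 h g ⟨i, hXY' i hiX, ?_⟩
            simpa [hh₀, hiX] using hi
          rw [this, mul_zero]
        · have : matEntry A f h = 0 := by
            refine hA.1 f h ⟨i, hiX, ?_⟩
            intro hc; apply hi; simp [hh₀, hiX, ← hc]
          rw [this, zero_mul]
      · intro hc; exact absurd (Finset.mem_univ h₀) hc
    have s2 : ∑ h, matEntry B f h * matEntry A h g = matEntry B f h₁ * matEntry A h₁ g := by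
      apply Finset.sum_eq_single h₁
      · intro h _ hne
        obtain ⟨i, hi⟩ := Function.ne_iff.mp hne
        by_cases hiY : i ∈ Y
        · have : matEntry A h g = 0 := by
            refine hA.1 h g ⟨i, fun hx => hXY' i hx hiY, ?_⟩
            simpa [hh₁, hiY] using hi
          rw [this, mul_zero]
        · have : matEntry B f h = 0 := by
            refine hB.1 f h ⟨i, hiY, ?_⟩
            intro hc; apply hi; simp [hh₁, hiY, ← hc]
          rw [this, zero_mul]
      · intro hc; exact absurd (Finset.mem_univ h₁) hc
    rw [s1, s2]
    have e1 : matEntry A f h₀ = matEntry A h₁ g := by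
      apply hA.2
      · intro i hi; simp [hh₁, hXY' i hi]
      · intro i hi; simp [hh₀, hi]
      · intro i hi; simp [hh₀, hi]
      · intro i hi
        by_cases hiY : i ∈ Y
        · simp [hh₁, hiY]
        · simp [hh₁, hiY, hfg i hi hiY]
    have e2 : matEntry B h₀ g = matEntry B f h₁ := by
      apply hB.2
      · intro i hi
        have hx : i ∉ X := fun hx => hXY' i hx hi
        simp [hh₀, hx]
      · intro i hi; simp [hh₁, hi]
      · intro i hi
        by_cases hiX : i ∈ X
        · simp [hh₀, hiX]
        · simp [hh₀, hiX, hfg i hiX hi]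
      · intro i hi; simp [hh₁, hi]
    rw [e1, e2]; ring
  · push_neg at hfg
    obtain ⟨i₀, hiX, hiY, hne⟩ := hfg
    rw [Finset.sum_eq_zero, Finset.sum_eq_zero]
    · intro h _
      by_cases hc : f i₀ = h i₀
      · have : matEntry A h g = 0 := hA.1 h g ⟨i₀, hiX, by rw [← hc]; exact hne⟩
        rw [this, mul_zero]
      · have : matEntry B f h = 0 := hB.1 f h ⟨i₀, hiY, hc⟩
        rw [this, zero_mul]
    · intro h _
      by_cases hc : f i₀ = h i₀
      · have : matEntry B h g = 0 := hB.1 h g ⟨i₀, hiY, by rw [← hc]; exact hne⟩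
        rw [this, mul_zero]
      · have : matEntry A f h = 0 := hA.1 f h ⟨i₀, hiX, hc⟩
        rw [this, zero_mul]

/-- The operator acting as the matrix `m` on site `j` and identity elsewhere. -/
def siteOp (j : Fin N) (m : Matrix (Fin d) (Fin d) ℂ) : SpinOp N d :=
  LinearMap.toContinuousLinearMap
  { toFun := fun ψ => (WithLp.toLp 2 (fun f => ∑ s, m (f j) s * ψ (Function.update f j s)) : SpinSpace N d)
    map_add' := by
      intro ψ χ
      apply PiLp.ext; intro f
      show (∑ s, m (f j) s * (ψ + χ) (Function.update f j s)) = _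
      simp [PiLp.add_apply, mul_add, Finset.sum_add_distrib]
    map_smul' := by
      intro c ψ
      apply PiLp.ext; intro f
      show (∑ s, m (f j) s * (c • ψ) (Function.update f j s)) = _
      simp only [PiLp.smul_apply, smul_eq_mul, RingHom.id_apply, Finset.mul_sum]
      exact Finset.sum_congr rfl fun s _ => by ring }

lemma siteOp_apply (j : Fin N) (m : Matrix (Fin d) (Fin d) ℂ) (ψ : SpinSpace N d)
    (f : Fin N → Fin d) :
    (siteOp j m ψ) f = ∑ s, m (f j) s * ψ (Function.update f j s) := rfl

lemma basisVec_apply (g h : Fin N → Fin d) : basisVec g h = if h = g then 1 else 0 := by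
  simp [basisVec, EuclideanSpace.single_apply]

lemma matEntry_siteOp (j : Fin N) (m : Matrix (Fin d) (Fin d) ℂ) (f g : Fin N → Fin d) :
    matEntry (siteOp j m) f g =
      if ∀ i, i ≠ j → f i = g i then m (f j) (g j) else 0 := by
  rw [matEntry_eq, siteOp_apply]
  by_cases hfg : ∀ i, i ≠ j → f i = g i
  · rw [if_pos hfg, Finset.sum_eq_single (g j)]
    · rw [basisVec_apply, if_pos, mul_one]
      funext i
      by_cases hij : i = j
      · subst hij; simp
      · rw [Function.update_of_ne hij]; exact hfg i hij
    · intro s _ hs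
      rw [basisVec_apply, if_neg, mul_zero]
      intro hc
      apply hs
      have := congrFun hc j
      simpa using this
    · intro hc; exact absurd (Finset.mem_univ _) hc
  · rw [if_neg hfg, Finset.sum_eq_zero]
    intro s _
    rw [basisVec_apply, if_neg, mul_zero]
    intro hc
    apply hfg
    intro i hij
    have := congrFun hc i
    rwa [Function.update_of_ne hij] at this

lemma supportedOn_siteOp (j : Fin N) (m : Matrix (Fin d) (Fin d) ℂ) :
    SupportedOn {j} (siteOp j m) := by
  constructor
  · rintro f g ⟨i, hi, hne⟩
    rw [matEntry_siteOp, if_neg]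
    intro hall
    exact hne (hall i (by simpa using hi))
  · intro f g f' g' hf hg hfg hf'g'
    rw [matEntry_siteOp, matEntry_siteOp]
    have h1 : (∀ i, i ≠ j → f i = g i) ↔ (∀ i, i ≠ j → f' i = g' i) := by
      constructor <;> intro _ i hij
      · exact hf'g' i (by simpa using hij)
      · exact hfg i (by simpa using hij)
    by_cases hc : ∀ i, i ≠ j → f i = g i
    · rw [if_pos hc, if_pos (h1.mp hc), hf j (by simp), hg j (by simp)]
    · rw [if_neg hc, if_neg (fun hx => hc (h1.mpr hx))]

lemma siteOp_add (j : Fin N) (m m' : Matrix (Fin d) (Fin d) ℂ) :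
    siteOp j (m + m') = siteOp j m + siteOp j m' := by
  apply ContinuousLinearMap.ext; intro ψ
  apply PiLp.ext; intro f
  rw [ContinuousLinearMap.add_apply, PiLp.add_apply, siteOp_apply, siteOp_apply, siteOp_apply]
  simp [Matrix.add_apply, add_mul, Finset.sum_add_distrib]

lemma siteOp_smul (j : Fin N) (c : ℂ) (m : Matrix (Fin d) (Fin d) ℂ) :
    siteOp j (c • m) = c • siteOp j m := by
  apply ContinuousLinearMap.ext; intro ψ
  apply PiLp.ext; intro f
  rw [ContinuousLinearMap.smul_apply, PiLp.smul_apply, siteOp_apply, siteOp_apply]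
  simp [Matrix.smul_apply, Finset.mul_sum, mul_assoc]

lemma euclid_norm_sq (ψ : SpinSpace N d) : ‖ψ‖ ^ 2 = ∑ f, ‖ψ f‖ ^ 2 := by
  rw [EuclideanSpace.norm_eq, Real.sq_sqrt (by positivity)]

lemma norm_siteOp_std (j : Fin N) (a b : Fin d) :
    ‖siteOp j (Matrix.single a b 1)‖ ≤ 1 := by
  apply ContinuousLinearMap.opNorm_le_bound _ zero_le_one
  intro ψ
  rw [one_mul]
  have h2 : ‖siteOp j (Matrix.single a b 1) ψ‖ ^ 2 ≤ ‖ψ‖ ^ 2 := by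
    rw [euclid_norm_sq, euclid_norm_sq]
    have happ : ∀ f, (siteOp j (Matrix.single a b 1) ψ) f
        = if f j = a then ψ (Function.update f j b) else 0 := by
      intro f
      rw [siteOp_apply]
      by_cases hfa : f j = a
      · rw [if_pos hfa, Finset.sum_eq_single b]
        · rw [Matrix.single, Matrix.of_apply, if_pos ⟨hfa.symm, rfl⟩, one_mul]
        · intro s _ hs
          rw [Matrix.single, Matrix.of_apply,
            if_neg (fun h : a = f j ∧ b = s => hs h.2.symm), zero_mul]
        · intro hc; exact absurd (Finset.mem_univ _) hc
      · rw [if_neg hfa, Finset.sum_eq_zero]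
        intro s _
        rw [Matrix.single, Matrix.of_apply,
          if_neg (fun h : a = f j ∧ b = s => hfa h.1.symm), zero_mul]
    calc ∑ f, ‖(siteOp j (Matrix.single a b 1) ψ) f‖ ^ 2
        = ∑ f ∈ Finset.univ.filter (fun f => f j = a), ‖ψ (Function.update f j b)‖ ^ 2 := by
          rw [Finset.sum_filter]
          refine Finset.sum_congr rfl fun f _ => ?_
          rw [happ f]
          by_cases hfa : f j = a <;> simp [hfa]
      _ = ∑ g ∈ (Finset.univ.filter (fun f => f j = a)).image
            (fun f => Function.update f j b), ‖ψ g‖ ^ 2 := by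
          rw [Finset.sum_image]
          intro x hx y hy hxy
          simp only [Finset.mem_coe, Finset.mem_filter] at hx hy
          funext i
          by_cases hij : i = j
          · subst hij; rw [hx.2, hy.2]
          · have := congrFun hxy i
            simp only [Function.update_of_ne hij] at this; exact this
      _ ≤ ∑ g, ‖ψ g‖ ^ 2 := by
          apply Finset.sum_le_sum_of_subset_of_nonneg (Finset.subset_univ _)
          intro g _ _; positivity
  have := Real.sqrt_le_sqrt h2
  rwa [Real.sqrt_sq (norm_nonneg _), Real.sqrt_sq (norm_nonneg _)] at this

open scoped Matrix
lemma euclid_inner (ψ χ : SpinSpace N d) :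
    (inner ℂ ψ χ : ℂ) = ∑ f, conj (ψ f) * χ f := by
  rw [PiLp.inner_apply]
  exact Finset.sum_congr rfl fun f _ => by rw [RCLike.inner_apply]; ring

/-- The site-update involution used for reindexing. -/
def updEquiv (j : Fin N) : ((Fin N → Fin d) × Fin d) ≃ ((Fin N → Fin d) × Fin d) :=
  Function.Involutive.toPerm
    (fun p => (Function.update p.1 j p.2, p.1 j))
    (by
      rintro ⟨f, u⟩
      simp only [Prod.mk.injEq]
      constructor
      · funext i
        by_cases hij : i = j
        · subst hij; simp
        · simp [Function.update_of_ne hij]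
      · simp)

lemma siteOp_inner_adj (j : Fin N) (m : Matrix (Fin d) (Fin d) ℂ)
    (ψ χ : SpinSpace N d) :
    (inner ℂ (siteOp j m ψ) χ : ℂ) = inner ℂ ψ (siteOp j mᴴ χ) := by
  rw [euclid_inner, euclid_inner]
  calc ∑ f, conj ((siteOp j m ψ) f) * χ f
      = ∑ p : (Fin N → Fin d) × Fin d,
          conj (m (p.1 j) p.2) * conj (ψ (Function.update p.1 j p.2)) * χ p.1 := by
        rw [Fintype.sum_prod_type]
        refine Finset.sum_congr rfl fun f _ => ?_
        rw [siteOp_apply, map_sum, Finset.sum_mul]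
        refine Finset.sum_congr rfl fun u _ => ?_
        rw [map_mul]
    _ = ∑ p : (Fin N → Fin d) × Fin d,
          conj (m ((updEquiv j p).1 j) (updEquiv j p).2)
            * conj (ψ (Function.update (updEquiv j p).1 j (updEquiv j p).2))
            * χ (updEquiv j p).1 := (Equiv.sum_comp (updEquiv j) _).symm
    _ = ∑ f, conj (ψ f) * ((siteOp j mᴴ) χ) f := by
        rw [Fintype.sum_prod_type]
        refine Finset.sum_congr rfl fun f _ => ?_
        rw [siteOp_apply, Finset.mul_sum]
        refine Finset.sum_congr rfl fun u _ => ?_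
        have h1 : (updEquiv j (f, u)).1 = Function.update f j u := rfl
        have h2 : (updEquiv j (f, u)).2 = f j := rfl
        rw [h1, h2]
        have h3 : Function.update (Function.update f j u) j (f j) = f := by
          funext i
          by_cases hij : i = j
          · subst hij; simp
          · simp [Function.update_of_ne hij]
        rw [h3]
        have h4 : (Function.update f j u) j = u := Function.update_self j u f
        rw [h4, Matrix.conjTranspose_apply, starRingEnd_apply]
        ring

lemma siteOp_std_apply (j : Fin N) (a b : Fin d) (ψ : SpinSpace N d) (f : Fin N → Fin d) :
    (siteOp j (Matrix.single a b 1) ψ) f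
      = if f j = a then ψ (Function.update f j b) else 0 := by
  rw [siteOp_apply]
  by_cases hfa : f j = a
  · rw [if_pos hfa, Finset.sum_eq_single b]
    · rw [Matrix.single, Matrix.of_apply, if_pos ⟨hfa.symm, rfl⟩, one_mul]
    · intro s _ hs
      rw [Matrix.single, Matrix.of_apply,
        if_neg (fun h : a = f j ∧ b = s => hs h.2.symm), zero_mul]
    · intro hc; exact absurd (Finset.mem_univ _) hc
  · rw [if_neg hfa, Finset.sum_eq_zero]
    intro s _
    rw [Matrix.single, Matrix.of_apply,
      if_neg (fun h : a = f j ∧ b = s => hfa h.1.symm), zero_mul]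

lemma corr1 (ψ : SpinSpace N d) (i : Fin N) (s s' : Fin d) :
    (inner ℂ ψ (siteOp i (Matrix.single s' s 1) ψ) : ℂ) = rdm1 ψ i s s' := by
  rw [euclid_inner, rdm1]
  refine Finset.sum_congr rfl fun f _ => ?_
  rw [siteOp_std_apply]
  by_cases hc : f i = s' <;> simp [hc, mul_comm]

lemma corr2 (ψ : SpinSpace N d) {i j : Fin N} (hij : i ≠ j) (s s' t t' : Fin d) :
    (inner ℂ ψ (siteOp i (Matrix.single s' s 1)
        (siteOp j (Matrix.single t' t 1) ψ)) : ℂ)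
      = rdm2 ψ i j (s, t) (s', t') := by
  rw [euclid_inner, rdm2]
  refine Finset.sum_congr rfl fun f _ => ?_
  rw [siteOp_std_apply]
  by_cases hc : f i = s'
  · rw [if_pos hc, siteOp_std_apply]
    have : Function.update f i s j = f j := Function.update_of_ne (Ne.symm hij) s f
    rw [this]
    by_cases hd : f j = t'
    · rw [if_pos hd, if_pos (⟨hc, hd⟩ : f i = (s',t').1 ∧ f j = (s',t').2), mul_comm]
    · rw [if_neg hd, if_neg (fun h : f i = (s',t').1 ∧ f j = (s',t').2 => hd h.2), mul_zero]
  · rw [if_neg hc, if_neg (fun h : f i = (s',t').1 ∧ f j = (s',t').2 => hc h.1), mul_zero]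

section matnorm
variable {ι : Type*} [Fintype ι] [DecidableEq ι]

lemma euclid_decomp' (y : EuclideanSpace ℂ ι) :
    y = ∑ q, EuclideanSpace.single q (y q) := by
  apply PiLp.ext
  intro r
  rw [WithLp.ofLp_sum, Finset.sum_apply]
  rw [Finset.sum_eq_single r]
  · simp
  · intro q _ hq; simp [EuclideanSpace.single_apply, Ne.symm hq]
  · intro hc; exact absurd (Finset.mem_univ _) hc

lemma euclid_l1 (y : EuclideanSpace ℂ ι) : ‖y‖ ≤ ∑ q, ‖y q‖ := by
  calc ‖y‖ = ‖∑ q, EuclideanSpace.single q (y q)‖ := by rw [← euclid_decomp']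
    _ ≤ ∑ q, ‖EuclideanSpace.single q (y q)‖ := norm_sum_le _ _
    _ = ∑ q, ‖y q‖ := by
        refine Finset.sum_congr rfl fun q _ => ?_
        rw [EuclideanSpace.norm_single]

lemma euclid_coord_le (y : EuclideanSpace ℂ ι) (r : ι) : ‖y r‖ ≤ ‖y‖ := by
  rw [EuclideanSpace.norm_eq]
  have h1 : ‖y r‖ = Real.sqrt (‖y r‖ ^ 2) := by
    rw [Real.sqrt_sq (norm_nonneg _)]
  rw [h1]
  apply Real.sqrt_le_sqrt
  apply Finset.single_le_sum (f := fun i => ‖y i‖ ^ 2) (fun i _ => by positivity)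
    (Finset.mem_univ r)

lemma toEuclideanCLM_coord (M : Matrix ι ι ℂ) (x : EuclideanSpace ℂ ι) (q : ι) :
    (Matrix.toEuclideanCLM (𝕜 := ℂ) M x) q = ∑ r, M q r * x r := rfl

lemma matOpNorm_le_sum_abs (M : Matrix ι ι ℂ) :
    matOpNorm M ≤ ∑ q, ∑ r, ‖M q r‖ := by
  apply ContinuousLinearMap.opNorm_le_bound
  · positivity
  intro x
  calc ‖Matrix.toEuclideanCLM (𝕜 := ℂ) M x‖
      ≤ ∑ q, ‖(Matrix.toEuclideanCLM (𝕜 := ℂ) M x) q‖ := euclid_l1 _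
    _ ≤ ∑ q, ∑ r, ‖M q r‖ * ‖x‖ := by
        apply Finset.sum_le_sum
        intro q _
        rw [toEuclideanCLM_coord]
        calc ‖∑ r, M q r * x r‖ ≤ ∑ r, ‖M q r * x r‖ :=
              norm_sum_le _ _
          _ ≤ ∑ r, ‖M q r‖ * ‖x‖ := by
              apply Finset.sum_le_sum
              intro r _
              rw [norm_mul]
              exact mul_le_mul_of_nonneg_left (euclid_coord_le x r) (by positivity)
    _ = (∑ q, ∑ r, ‖M q r‖) * ‖x‖ := by
        rw [Finset.sum_mul]
        exact Finset.sum_congr rfl fun q _ => by rw [Finset.sum_mul]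
end matnorm

lemma norm_comm_le (x y : SpinOp N d) : ‖x * y - y * x‖ ≤ 2 * ‖x‖ * ‖y‖ := by
  calc ‖x * y - y * x‖ ≤ ‖x * y‖ + ‖y * x‖ := norm_sub_le _ _
    _ ≤ ‖x‖ * ‖y‖ + ‖y‖ * ‖x‖ :=
        add_le_add (ContinuousLinearMap.opNorm_comp_le _ _) (ContinuousLinearMap.opNorm_comp_le _ _)
    _ = 2 * ‖x‖ * ‖y‖ := by ring

section core
variable {k : ℕ} {g δE : ℝ} {H : SpinOp N d} {Ω : SpinSpace N d}
  {n : ℕ} {X : Fin n → Finset (Fin N)} {h : Fin n → SpinOp N d}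

lemma double_comm_bound
    (hg : 0 < g) (hk : 0 < k)
    (hdec : ∀ t, (X t).card ≤ k ∧ SupportedOn (X t) (h t) ∧ IsSelfAdjoint (h t))
    (hstr : ∀ i : Fin N, ∑ t ∈ Finset.univ.filter (fun t => i ∈ X t), ‖h t‖ ≤ g)
    (hH : H = ∑ t, h t)
    (L : Finset (Fin N)) (a : Fin N → SpinOp N d)
    (ha : ∀ j ∈ L, SupportedOn {j} (a j) ∧ ‖a j‖ ≤ 2) :
    ‖(∑ j ∈ L, a j) * (H * (∑ j ∈ L, a j) - (∑ j ∈ L, a j) * H)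
      - (H * (∑ j ∈ L, a j) - (∑ j ∈ L, a j) * H) * (∑ j ∈ L, a j)‖
      ≤ 16 * k * g * L.card := by
  set A := ∑ j ∈ L, a j with hA
  -- commutation facts
  have hcomm : ∀ (j : Fin N), j ∈ L → ∀ t, j ∉ X t → Commute (a j) (h t) := by
    intro j hj t hjt
    exact commute_of_disjoint_support (ha j hj).1 (hdec t).2.1
      (by simpa using hjt)
  have hcomm2 : ∀ (j j' : Fin N), j ∈ L → j' ∈ L → j ≠ j' → Commute (a j) (a j') := by
    intro j j' hj hj' hne
    exact commute_of_disjoint_support (ha j hj).1 (ha j' hj').1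
      (Finset.disjoint_singleton.mpr hne)
  -- inner ℂ commutator decomposition
  have hK : ∀ t, h t * A - A * h t
      = ∑ j ∈ L.filter (fun j => j ∈ X t), (h t * a j - a j * h t) := by
    intro t
    rw [hA, Finset.mul_sum, Finset.sum_mul, ← Finset.sum_sub_distrib,
      Finset.sum_filter]
    refine Finset.sum_congr rfl fun j hj => ?_
    by_cases hjt : j ∈ X t
    · rw [if_pos hjt]
    · rw [if_neg hjt, (hcomm j hj t hjt).eq, sub_self]
  -- outer commutator decomposition
  have hD : A * (H * A - A * H) - (H * A - A * H) * A
      = ∑ t, ∑ j' ∈ L.filter (fun j => j ∈ X t), ∑ j ∈ L.filter (fun j => j ∈ X t),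
          (a j' * (h t * a j - a j * h t) - (h t * a j - a j * h t) * a j') := by
    have hKsum : H * A - A * H = ∑ t, (h t * A - A * h t) := by
      rw [hH, Finset.sum_mul, Finset.mul_sum, ← Finset.sum_sub_distrib]
    rw [hKsum, Finset.mul_sum, Finset.sum_mul, ← Finset.sum_sub_distrib]
    refine Finset.sum_congr rfl fun t _ => ?_
    rw [hK t, Finset.mul_sum, Finset.sum_mul, ← Finset.sum_sub_distrib]
    have : ∀ q ∈ L.filter (fun j => j ∈ X t),
        A * (h t * a q - a q * h t) - (h t * a q - a q * h t) * A
        = ∑ j' ∈ L.filter (fun j => j ∈ X t),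
            (a j' * (h t * a q - a q * h t) - (h t * a q - a q * h t) * a j') := by
      intro q hq
      rw [Finset.mem_filter] at hq
      rw [hA, Finset.sum_mul, Finset.mul_sum, ← Finset.sum_sub_distrib, Finset.sum_filter]
      refine Finset.sum_congr rfl fun j' hj' => ?_
      by_cases hj't : j' ∈ X t
      · rw [if_pos hj't]
      · rw [if_neg hj't]
        have c1 : Commute (a j') (h t) := hcomm j' hj' t hj't
        have c2 : Commute (a j') (a q) := by
          apply hcomm2 j' q hj' hq.1
          intro hqq; rw [hqq] at hj't; exact hj't hq.2
        have : Commute (a j') (h t * a q - a q * h t) :=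
          (c1.mul_right c2).sub_right (c2.mul_right c1)
        rw [this.eq, sub_self]
    rw [Finset.sum_congr rfl this, ← Finset.sum_comm]
  rw [hD]
  -- norm bound
  have cardbd : ∀ t, ((L.filter (fun j => j ∈ X t)).card : ℝ) ≤ k := by
    intro t
    have : (L.filter (fun j => j ∈ X t)).card ≤ (X t).card :=
      Finset.card_le_card (fun j hj => (Finset.mem_filter.mp hj).2)
    exact_mod_cast this.trans (hdec t).1
  calc ‖∑ t, ∑ j' ∈ L.filter (fun j => j ∈ X t), ∑ j ∈ L.filter (fun j => j ∈ X t),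
          (a j' * (h t * a j - a j * h t) - (h t * a j - a j * h t) * a j')‖
      ≤ ∑ t, ∑ j' ∈ L.filter (fun j => j ∈ X t), ∑ j ∈ L.filter (fun j => j ∈ X t),
          (16 * ‖h t‖) := by
        refine (norm_sum_le _ _).trans (Finset.sum_le_sum fun t _ => ?_)
        refine (norm_sum_le _ _).trans (Finset.sum_le_sum fun j' hj' => ?_)
        refine (norm_sum_le _ _).trans (Finset.sum_le_sum fun j hj => ?_)
        rw [Finset.mem_filter] at hj hj'
        have b1 : ‖h t * a j - a j * h t‖ ≤ 2 * ‖h t‖ * 2 := by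
          refine (norm_comm_le _ _).trans ?_
          have := (ha j hj.1).2
          have hn : (0:ℝ) ≤ ‖h t‖ := norm_nonneg _
          nlinarith [norm_nonneg (a j)]
        refine (norm_comm_le _ _).trans ?_
        have b2 : ‖a j'‖ ≤ 2 := (ha j' hj'.1).2
        have hn : (0:ℝ) ≤ ‖h t * a j - a j * h t‖ := norm_nonneg _
        nlinarith [norm_nonneg (a j')]
    _ = ∑ t, ((L.filter (fun j => j ∈ X t)).card : ℝ)^2 * (16 * ‖h t‖) := by
        refine Finset.sum_congr rfl fun t _ => ?_
        rw [Finset.sum_const, Finset.sum_const, nsmul_eq_mul, nsmul_eq_mul]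
        ring
    _ ≤ ∑ t, (k : ℝ) * (16 * ‖h t‖) * ((L.filter (fun j => j ∈ X t)).card : ℝ) := by
        refine Finset.sum_le_sum fun t _ => ?_
        have h1 := cardbd t
        have h2 : (0:ℝ) ≤ ((L.filter (fun j => j ∈ X t)).card : ℝ) := by positivity
        have h3 : (0:ℝ) ≤ ‖h t‖ := norm_nonneg _
        have h4 : ((L.filter (fun j => j ∈ X t)).card : ℝ)^2
            ≤ (k:ℝ) * ((L.filter (fun j => j ∈ X t)).card : ℝ) := by nlinarith
        nlinarith [mul_le_mul_of_nonneg_right h4 (by positivity : (0:ℝ) ≤ 16 * ‖h t‖)]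
    _ = (16 : ℝ) * k * ∑ t, ‖h t‖ * ((L.filter (fun j => j ∈ X t)).card : ℝ) := by
        rw [Finset.mul_sum]
        exact Finset.sum_congr rfl fun t _ => by ring
    _ ≤ 16 * k * (g * L.card) := by
        have key : ∑ t, ‖h t‖ * ((L.filter (fun j => j ∈ X t)).card : ℝ) ≤ g * L.card := by
          calc ∑ t, ‖h t‖ * ((L.filter (fun j => j ∈ X t)).card : ℝ)
              = ∑ t, ∑ j ∈ L, (if j ∈ X t then ‖h t‖ else 0) := by
                refine Finset.sum_congr rfl fun t _ => ?_
                rw [← Finset.sum_filter, Finset.sum_const, nsmul_eq_mul, mul_comm]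
            _ = ∑ j ∈ L, ∑ t, (if j ∈ X t then ‖h t‖ else 0) := Finset.sum_comm
            _ ≤ ∑ j ∈ L, g := by
                refine Finset.sum_le_sum fun j _ => ?_
                rw [← Finset.sum_filter]
                exact hstr j
            _ = g * L.card := by rw [Finset.sum_const, nsmul_eq_mul, mul_comm]
        have : (0:ℝ) ≤ 16 * k := by positivity
        nlinarith
    _ = 16 * k * g * L.card := by ring
end core

section core2
variable {k : ℕ} {g δE : ℝ} {H : SpinOp N d} {Ω : SpinSpace N d}
  {n : ℕ} {X : Fin n → Finset (Fin N)} {h : Fin n → SpinOp N d}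

lemma var_bound
    (hg : 0 < g) (hk : 0 < k) (hδE : 0 < δE)
    (hdec : ∀ t, (X t).card ≤ k ∧ SupportedOn (X t) (h t) ∧ IsSelfAdjoint (h t))
    (hstr : ∀ i : Fin N, ∑ t ∈ Finset.univ.filter (fun t => i ∈ X t), ‖h t‖ ≤ g)
    (hH : H = ∑ t, h t)
    (hΩn : ‖Ω‖ = 1) (hHΩ : H Ω = 0)
    (hgap : ∀ φ : SpinSpace N d, (inner ℂ Ω φ : ℂ) = 0 → δE * ‖φ‖ ^ 2 ≤ (inner ℂ φ (H φ) : ℂ).re)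
    (L : Finset (Fin N)) (a : Fin N → SpinOp N d)
    (ha : ∀ j ∈ L, SupportedOn {j} (a j) ∧ (∀ x y : SpinSpace N d,
        (inner ℂ (a j x) y : ℂ) = inner ℂ x (a j y)) ∧ ‖a j‖ ≤ 2) :
    ‖(∑ j ∈ L, a j) Ω - (inner ℂ Ω ((∑ j ∈ L, a j) Ω) : ℂ) • Ω‖
      ≤ Real.sqrt (8 * k * g * L.card / δE) := by
  set A : SpinOp N d := ∑ j ∈ L, a j with hA
  set μ : ℂ := inner ℂ Ω (A Ω) with hμ
  set φ : SpinSpace N d := A Ω - μ • Ω with hφ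
  -- H is symmetric
  have hHsa : IsSelfAdjoint H := by
    rw [hH]
    exact Finset.sum_induction h IsSelfAdjoint (fun a b ha hb => IsSelfAdjoint.add (R := SpinOp N d) ha hb)
      (IsSelfAdjoint.zero (SpinOp N d)) (fun t _ => (hdec t).2.2)
  have Hsym : ∀ x y : SpinSpace N d, (inner ℂ (H x) y : ℂ) = inner ℂ x (H y) :=
    fun x y => hHsa.isSymmetric x y
  -- A is symmetric
  have Asym : ∀ x y : SpinSpace N d, (inner ℂ (A x) y : ℂ) = inner ℂ x (A y) := by
    intro x y
    rw [hA]
    simp only [ContinuousLinearMap.sum_apply, sum_inner, inner_sum]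
    exact Finset.sum_congr rfl fun j hj => (ha j hj).2.1 x y
  -- φ ⊥ Ω
  have hiΩ : (inner ℂ Ω Ω : ℂ) = 1 := by
    rw [inner_self_eq_norm_sq_to_K, hΩn]; norm_num
  have hperp : (inner ℂ Ω φ : ℂ) = 0 := by
    rw [hφ, inner_sub_right, inner_smul_right, hiΩ, mul_one, ← hμ, sub_self]
  -- the energy of φ
  have hHφ : H φ = H (A Ω) := by
    rw [hφ, map_sub, map_smul, hHΩ, smul_zero, sub_zero]
  have hΩHA : (inner ℂ Ω (H (A Ω)) : ℂ) = 0 := by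
    rw [← Hsym, hHΩ]
    simp
  have henergy : (inner ℂ φ (H φ) : ℂ) = inner ℂ (A Ω) (H (A Ω)) := by
    rw [hHφ, hφ, inner_sub_left, inner_smul_left, hΩHA, mul_zero, sub_zero]
  -- double-commutator identity
  set K : SpinOp N d := H * A - A * H with hKdef
  set D : SpinOp N d := A * K - K * A with hDdef
  have hDid : (inner ℂ Ω (D Ω) : ℂ) = 2 * inner ℂ (A Ω) (H (A Ω)) := by
    have hKΩ : K Ω = H (A Ω) := by
      rw [hKdef]
      show (H * A) Ω - (A * H) Ω = H (A Ω)
      rw [ContinuousLinearMap.mul_apply, ContinuousLinearMap.mul_apply, hHΩ, map_zero, sub_zero]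
    have e1 : (inner ℂ Ω ((A * K) Ω) : ℂ) = inner ℂ (A Ω) (H (A Ω)) := by
      rw [ContinuousLinearMap.mul_apply, hKΩ, ← Asym]
    have e2 : (inner ℂ Ω ((K * A) Ω) : ℂ) = - inner ℂ (A Ω) (H (A Ω)) := by
      rw [ContinuousLinearMap.mul_apply, hKdef]
      show (inner ℂ Ω ((H * A) (A Ω) - (A * H) (A Ω)) : ℂ) = _
      rw [inner_sub_right]
      have t1 : (inner ℂ Ω ((H * A) (A Ω)) : ℂ) = 0 := by
        rw [ContinuousLinearMap.mul_apply, ← Hsym, hHΩ, inner_zero_left]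
      have t2 : (inner ℂ Ω ((A * H) (A Ω)) : ℂ) = inner ℂ (A Ω) (H (A Ω)) := by
        rw [ContinuousLinearMap.mul_apply, ← Asym]
      rw [t1, t2]
      ring
    rw [hDdef]
    show (inner ℂ Ω ((A * K) Ω - (K * A) Ω) : ℂ) = _
    rw [inner_sub_right, e1, e2]
    ring
  -- gap bound
  have hgapφ : δE * ‖φ‖ ^ 2 ≤ (inner ℂ φ (H φ) : ℂ).re := hgap φ hperp
  have hz : (inner ℂ φ (H φ) : ℂ).re ≤ ‖D‖ / 2 := by
    have h1 : (2:ℝ) * (inner ℂ φ (H φ) : ℂ).re = (inner ℂ Ω (D Ω) : ℂ).re := by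
      rw [henergy, hDid, Complex.mul_re]
      norm_num
    have h2 : (inner ℂ Ω (D Ω) : ℂ).re ≤ ‖D‖ := by
      calc (inner ℂ Ω (D Ω) : ℂ).re ≤ ‖(inner ℂ Ω (D Ω) : ℂ)‖ := Complex.re_le_norm _
        _ ≤ ‖Ω‖ * ‖D Ω‖ := by
            exact norm_inner_le_norm _ _
        _ ≤ ‖Ω‖ * (‖D‖ * ‖Ω‖) := by
            apply mul_le_mul_of_nonneg_left (D.le_opNorm Ω) (norm_nonneg _)
        _ = ‖D‖ := by rw [hΩn]; ring
    linarith
  -- combinatorial bound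
  have hDb : ‖D‖ ≤ 16 * k * g * L.card := by
    rw [hDdef, hKdef, hA]
    exact double_comm_bound hg hk hdec hstr hH L a (fun j hj => ⟨(ha j hj).1, (ha j hj).2.2⟩)
  -- conclude
  have hφ2 : ‖φ‖ ^ 2 ≤ 8 * k * g * L.card / δE := by
    rw [le_div_iff₀ hδE, mul_comm]
    calc δE * ‖φ‖ ^ 2 ≤ ‖D‖ / 2 := le_trans hgapφ hz
      _ ≤ 16 * k * g * L.card / 2 := by linarith
      _ = 8 * k * g * L.card := by ring
  calc ‖φ‖ = Real.sqrt (‖φ‖ ^ 2) := (Real.sqrt_sq (norm_nonneg _)).symm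
    _ ≤ Real.sqrt (8 * k * g * L.card / δE) := Real.sqrt_le_sqrt hφ2
end core2

lemma supportedOn_smul {X : Finset (Fin N)} {A : SpinOp N d} (c : ℂ)
    (hA : SupportedOn X A) : SupportedOn X (c • A) := by
  have hent : ∀ f g, matEntry (c • A) f g = c * matEntry A f g := by
    intro f g
    rw [matEntry_eq, matEntry_eq, ContinuousLinearMap.smul_apply, PiLp.smul_apply,
      smul_eq_mul]
  constructor
  · intro f g hfg; rw [hent, hA.1 f g hfg, mul_zero]
  · intro f g f' g' h1 h2 h3 h4
    rw [hent, hent, hA.2 f g f' g' h1 h2 h3 h4]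

section core3
variable {k : ℕ} {g δE : ℝ} {H : SpinOp N d} {Ω : SpinSpace N d}
  {n : ℕ} {X : Fin n → Finset (Fin N)} {h : Fin n → SpinOp N d}

lemma sum_cov_bound
    (hg : 0 < g) (hk : 0 < k) (hδE : 0 < δE)
    (hdec : ∀ t, (X t).card ≤ k ∧ SupportedOn (X t) (h t) ∧ IsSelfAdjoint (h t))
    (hstr : ∀ i : Fin N, ∑ t ∈ Finset.univ.filter (fun t => i ∈ X t), ‖h t‖ ≤ g)
    (hH : H = ∑ t, h t)
    (hΩn : ‖Ω‖ = 1) (hHΩ : H Ω = 0)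
    (hgap : ∀ φ : SpinSpace N d, (inner ℂ Ω φ : ℂ) = 0 → δE * ‖φ‖ ^ 2 ≤ (inner ℂ φ (H φ) : ℂ).re)
    (L : Finset (Fin N)) (a : Fin N → SpinOp N d)
    (ha : ∀ j ∈ L, SupportedOn {j} (a j) ∧ (∀ x y : SpinSpace N d,
        (inner ℂ (a j x) y : ℂ) = inner ℂ x (a j y)) ∧ ‖a j‖ ≤ 2)
    (b : SpinOp N d) (hb : ‖b‖ ≤ 1) :
    ∑ j ∈ L, ‖(inner ℂ Ω (b (a j Ω)) : ℂ)
        - (inner ℂ Ω (a j Ω) : ℂ) * (inner ℂ Ω (b Ω) : ℂ)‖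
      ≤ 2 * Real.sqrt (8 * k * g * L.card / δE) := by
  set Cov : Fin N → ℂ := fun j => (inner ℂ Ω (b (a j Ω)) : ℂ)
        - (inner ℂ Ω (a j Ω) : ℂ) * (inner ℂ Ω (b Ω) : ℂ) with hCov
  -- signed covariance bound
  have key : ∀ σ : Fin N → ℂ, (∀ j, σ j = 1 ∨ σ j = -1) →
      ‖∑ j ∈ L, σ j * Cov j‖ ≤ Real.sqrt (8 * k * g * L.card / δE) := by
    intro σ hσ
    set a' : Fin N → SpinOp N d := fun j => σ j • a j with ha'
    have hσre : ∀ j, conj (σ j) = σ j := by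
      intro j; rcases hσ j with h1 | h1 <;> rw [h1] <;> simp
    have hσabs : ∀ j, ‖σ j‖ = 1 := by
      intro j; rcases hσ j with h1 | h1 <;> rw [h1] <;> simp
    have ha'prop : ∀ j ∈ L, SupportedOn {j} (a' j) ∧ (∀ x y : SpinSpace N d,
        (inner ℂ (a' j x) y : ℂ) = inner ℂ x (a' j y)) ∧ ‖a' j‖ ≤ 2 := by
      intro j hj
      refine ⟨supportedOn_smul _ (ha j hj).1, ?_, ?_⟩
      · intro x y
        rw [ha']
        simp only [ContinuousLinearMap.smul_apply]
        rw [inner_smul_left, inner_smul_right, hσre, (ha j hj).2.1 x y]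
      · show ‖σ j • a j‖ ≤ 2
        have h2 : ‖σ j • a j‖ = ‖σ j‖ * ‖a j‖ := norm_smul (σ j) (a j)
        have h1 : ‖σ j‖ = 1 := hσabs j
        rw [h2, h1, one_mul]
        exact (ha j hj).2.2
    have hvar := var_bound hg hk hδE hdec hstr hH hΩn hHΩ hgap L a' ha'prop
    set A' : SpinOp N d := ∑ j ∈ L, a' j with hA'
    set μ' : ℂ := inner ℂ Ω (A' Ω) with hμ'
    have hexp : ∑ j ∈ L, σ j * Cov j = inner ℂ Ω (b (A' Ω - μ' • Ω)) := by
      have h1 : A' Ω = ∑ j ∈ L, σ j • (a j Ω) := by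
        rw [hA', ha']
        simp [ContinuousLinearMap.sum_apply, ContinuousLinearMap.smul_apply]
      have h2 : μ' = ∑ j ∈ L, σ j * (inner ℂ Ω (a j Ω) : ℂ) := by
        rw [hμ', h1, inner_sum]
        exact Finset.sum_congr rfl fun j _ => by rw [inner_smul_right]
      have h3 : (inner ℂ Ω (b (A' Ω)) : ℂ) = ∑ j ∈ L, σ j * (inner ℂ Ω (b (a j Ω)) : ℂ) := by
        rw [h1, map_sum, inner_sum]
        exact Finset.sum_congr rfl fun j _ => by rw [map_smul, inner_smul_right]
      rw [map_sub, map_smul, inner_sub_right, inner_smul_right, h3, h2, Finset.sum_mul,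
        ← Finset.sum_sub_distrib]
      exact Finset.sum_congr rfl fun j _ => by rw [hCov]; ring
    rw [hexp]
    calc ‖(inner ℂ Ω (b (A' Ω - μ' • Ω)) : ℂ)‖
        ≤ ‖Ω‖ * ‖b (A' Ω - μ' • Ω)‖ := by
          exact norm_inner_le_norm _ _
      _ ≤ 1 * (‖b‖ * ‖A' Ω - μ' • Ω‖) := by
          rw [hΩn]
          exact mul_le_mul_of_nonneg_left (b.le_opNorm _) zero_le_one
      _ ≤ 1 * (1 * Real.sqrt (8 * k * g * L.card / δE)) := by
          have h0 : (0:ℝ) ≤ ‖A' Ω - μ' • Ω‖ := norm_nonneg _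
          have := mul_le_mul hb hvar h0 zero_le_one
          linarith
      _ = Real.sqrt (8 * k * g * L.card / δE) := by ring
  -- split into real and imaginary parts
  set σ : Fin N → ℂ := fun j => if 0 ≤ (Cov j).re then 1 else -1 with hσdef
  set τ : Fin N → ℂ := fun j => if 0 ≤ (Cov j).im then 1 else -1 with hτdef
  have hσ : ∀ j, σ j = 1 ∨ σ j = -1 := by
    intro j; rw [hσdef]; by_cases hc : 0 ≤ (Cov j).re <;> simp [hc]
  have hτ : ∀ j, τ j = 1 ∨ τ j = -1 := by
    intro j; rw [hτdef]; by_cases hc : 0 ≤ (Cov j).im <;> simp [hc]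
  calc ∑ j ∈ L, ‖Cov j‖
      ≤ ∑ j ∈ L, (|(Cov j).re| + |(Cov j).im|) :=
        Finset.sum_le_sum fun j _ => Complex.norm_le_abs_re_add_abs_im _
    _ = (∑ j ∈ L, |(Cov j).re|) + (∑ j ∈ L, |(Cov j).im|) := Finset.sum_add_distrib
    _ ≤ ‖∑ j ∈ L, σ j * Cov j‖ + ‖∑ j ∈ L, τ j * Cov j‖ := by
        apply add_le_add
        · have : ∑ j ∈ L, |(Cov j).re| = (∑ j ∈ L, σ j * Cov j).re := by
            rw [Complex.re_sum]
            refine Finset.sum_congr rfl fun j _ => ?_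
            rw [hσdef]
            by_cases hc : 0 ≤ (Cov j).re
            · simp [hc, abs_of_nonneg hc]
            · push_neg at hc
              simp [if_neg (not_le.mpr hc), abs_of_neg hc]
          rw [this]
          exact Complex.re_le_norm _
        · have : ∑ j ∈ L, |(Cov j).im| = (∑ j ∈ L, τ j * Cov j).im := by
            rw [Complex.im_sum]
            refine Finset.sum_congr rfl fun j _ => ?_
            rw [hτdef]
            by_cases hc : 0 ≤ (Cov j).im
            · simp [hc, abs_of_nonneg hc]
            · push_neg at hc
              simp [if_neg (not_le.mpr hc), abs_of_neg hc]
          rw [this]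
          calc (∑ j ∈ L, τ j * Cov j).im ≤ |(∑ j ∈ L, τ j * Cov j).im| := le_abs_self _
            _ ≤ ‖∑ j ∈ L, τ j * Cov j‖ := Complex.abs_im_le_norm _
    _ ≤ Real.sqrt (8 * k * g * L.card / δE) + Real.sqrt (8 * k * g * L.card / δE) :=
        add_le_add (key σ hσ) (key τ hτ)
    _ = 2 * Real.sqrt (8 * k * g * L.card / δE) := by ring
end core3

lemma stdBasis_conjT (a b : Fin d) :
    (Matrix.single a b (1:ℂ))ᴴ = Matrix.single b a 1 := by
  ext x y
  simp [Matrix.conjTranspose_apply, Matrix.single, and_comm]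


theorem mean_field_pairwise_error
    (g : ℝ) (k d : ℕ) (hg : 0 < g) (hk : 0 < k) (hd : 0 < d) :
    ∃ C : ℝ, ∀ (N : ℕ) (H : SpinOp N d) (δE : ℝ),
      IsKLocalHamiltonian k g H → 0 < δE →
      ∀ Ω : SpinSpace N d, IsGappedGround H Ω δE →
      ∀ L : Finset (Fin N), δE ≤ g * L.card →
      ∀ i : Fin N, i ∉ L →
        ∑ j ∈ L,
          matOpNorm (rdm2 Ω i j -
            Matrix.kroneckerMap (· * ·) (rdm1 Ω i) (rdm1 Ω j)) ≤
          C * Real.sqrt (L.card / δE) := by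
  refine ⟨2 * (d:ℝ)^4 * Real.sqrt (8 * k * g), ?_⟩
  intro N H δE hham hδE Ω hground L hL i hiL
  obtain ⟨n, X, h, hdec, hstr, hH⟩ := hham
  obtain ⟨hΩn, hHΩ, -, hgap⟩ := hground
  have hij : ∀ j ∈ L, i ≠ j := fun j hj hc => hiL (hc ▸ hj)
  set Mmat : Fin N → Matrix (Fin d × Fin d) (Fin d × Fin d) ℂ :=
    fun j => rdm2 Ω i j - Matrix.kroneckerMap (· * ·) (rdm1 Ω i) (rdm1 Ω j) with hMmat
  have pair : ∀ q q' : Fin d × Fin d,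
      ∑ j ∈ L, ‖Mmat j q q'‖
        ≤ 2 * Real.sqrt (8 * k * g * L.card / δE) := by
    intro q q'
    set b : SpinOp N d := siteOp i (Matrix.single q'.1 q.1 1) with hbdef
    have hbnorm : ‖b‖ ≤ 1 := norm_siteOp_std i q'.1 q.1
    set E1 : Matrix (Fin d) (Fin d) ℂ := Matrix.single q'.2 q.2 1 with hE1
    set E2 : Matrix (Fin d) (Fin d) ℂ := Matrix.single q.2 q'.2 1 with hE2
    set S : Matrix (Fin d) (Fin d) ℂ := E1 + E2 with hS
    set T : Matrix (Fin d) (Fin d) ℂ := Complex.I • E1 + (-Complex.I) • E2 with hT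
    have hSadj : Sᴴ = S := by
      rw [hS, Matrix.conjTranspose_add, hE1, hE2, stdBasis_conjT, stdBasis_conjT, add_comm]
    have hTadj : Tᴴ = T := by
      rw [hT, Matrix.conjTranspose_add, Matrix.conjTranspose_smul, Matrix.conjTranspose_smul,
        hE1, hE2, stdBasis_conjT, stdBasis_conjT]
      rw [Complex.star_def, Complex.conj_I, map_neg, Complex.conj_I, neg_neg, add_comm]
    have hmatE : E1 = (1/2 : ℂ) • S + (-(Complex.I)/2) • T := by
      ext a c
      rw [hS, hT]
      simp only [Matrix.add_apply, Matrix.smul_apply, smul_eq_mul]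
      linear_combination ((E1 a c) - (E2 a c))/2 * Complex.I_sq
    have hop : ∀ j : Fin N, siteOp j E1
        = (1/2 : ℂ) • siteOp j S + (-(Complex.I)/2) • siteOp j T := by
      intro j
      rw [← siteOp_smul, ← siteOp_smul, ← siteOp_add, ← hmatE]
    -- properties of the two families
    have propS : ∀ j ∈ L, SupportedOn {j} (siteOp j S) ∧ (∀ x y : SpinSpace N d,
        (inner ℂ (siteOp j S x) y : ℂ) = inner ℂ x (siteOp j S y)) ∧ ‖siteOp j S‖ ≤ 2 := by
      intro j _
      refine ⟨supportedOn_siteOp j S, ?_, ?_⟩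
      · intro x y
        have := siteOp_inner_adj j S x y
        rwa [hSadj] at this
      · rw [hS, siteOp_add]
        calc ‖siteOp j E1 + siteOp j E2‖ ≤ ‖siteOp j E1‖ + ‖siteOp j E2‖ := norm_add_le _ _
          _ ≤ 1 + 1 := add_le_add (norm_siteOp_std j _ _) (norm_siteOp_std j _ _)
          _ = 2 := by norm_num
    have propT : ∀ j ∈ L, SupportedOn {j} (siteOp j T) ∧ (∀ x y : SpinSpace N d,
        (inner ℂ (siteOp j T x) y : ℂ) = inner ℂ x (siteOp j T y)) ∧ ‖siteOp j T‖ ≤ 2 := by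
      intro j _
      refine ⟨supportedOn_siteOp j T, ?_, ?_⟩
      · intro x y
        have := siteOp_inner_adj j T x y
        rwa [hTadj] at this
      · rw [hT, siteOp_add, siteOp_smul, siteOp_smul]
        have n1 : ‖Complex.I • siteOp j E1‖ ≤ 1 := by
          have e1 : ‖Complex.I • siteOp j E1‖ = ‖Complex.I‖ * ‖siteOp j E1‖ :=
            norm_smul Complex.I (siteOp j E1)
          rw [e1, Complex.norm_I, one_mul]
          exact norm_siteOp_std j _ _
        have n2 : ‖(-Complex.I) • siteOp j E2‖ ≤ 1 := by
          have e2 : ‖(-Complex.I) • siteOp j E2‖ = ‖-Complex.I‖ * ‖siteOp j E2‖ :=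
            norm_smul (-Complex.I) (siteOp j E2)
          rw [e2, norm_neg, Complex.norm_I, one_mul]
          exact norm_siteOp_std j _ _
        calc ‖Complex.I • siteOp j E1 + (-Complex.I) • siteOp j E2‖
            ≤ ‖Complex.I • siteOp j E1‖ + ‖(-Complex.I) • siteOp j E2‖ := norm_add_le _ _
          _ ≤ 2 := by linarith
    have bS := sum_cov_bound hg hk hδE hdec hstr hH hΩn hHΩ hgap L
        (fun j => siteOp j S) propS b hbnorm
    have bT := sum_cov_bound hg hk hδE hdec hstr hH hΩn hHΩ hgap L
        (fun j => siteOp j T) propT b hbnorm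
    -- entry identity
    have hentry : ∀ j ∈ L, Mmat j q q'
        = (inner ℂ Ω (b (siteOp j E1 Ω)) : ℂ)
          - (inner ℂ Ω (siteOp j E1 Ω) : ℂ) * (inner ℂ Ω (b Ω) : ℂ) := by
      intro j hj
      have h2 := corr2 Ω (hij j hj) q.1 q'.1 q.2 q'.2
      have h1i := corr1 Ω i q.1 q'.1
      have h1j := corr1 Ω j q.2 q'.2
      rw [hMmat]
      show (rdm2 Ω i j - Matrix.kroneckerMap (· * ·) (rdm1 Ω i) (rdm1 Ω j)) q q' = _
      rw [Matrix.sub_apply, Matrix.kroneckerMap_apply]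
      rw [← Prod.mk.eta (p := q), ← Prod.mk.eta (p := q')] 
      rw [← h2, ← h1i, ← h1j, hbdef, hE1]
      ring
    -- linear decomposition of the covariance
    have hlin : ∀ j ∈ L, Mmat j q q'
        = (1/2 : ℂ) * ((inner ℂ Ω (b (siteOp j S Ω)) : ℂ)
            - (inner ℂ Ω (siteOp j S Ω) : ℂ) * (inner ℂ Ω (b Ω) : ℂ))
          + (-(Complex.I)/2) * ((inner ℂ Ω (b (siteOp j T Ω)) : ℂ)
            - (inner ℂ Ω (siteOp j T Ω) : ℂ) * (inner ℂ Ω (b Ω) : ℂ)) := by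
      intro j hj
      rw [hentry j hj, hop j]
      simp only [ContinuousLinearMap.add_apply, ContinuousLinearMap.smul_apply, map_add,
        map_smul, inner_add_right, inner_smul_right]
      ring
    calc ∑ j ∈ L, ‖Mmat j q q'‖
        ≤ ∑ j ∈ L, ((1/2) * ‖(inner ℂ Ω (b (siteOp j S Ω)) : ℂ)
            - (inner ℂ Ω (siteOp j S Ω) : ℂ) * (inner ℂ Ω (b Ω) : ℂ)‖
          + (1/2) * ‖(inner ℂ Ω (b (siteOp j T Ω)) : ℂ)
            - (inner ℂ Ω (siteOp j T Ω) : ℂ) * (inner ℂ Ω (b Ω) : ℂ)‖) := by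
          refine Finset.sum_le_sum fun j hj => ?_
          rw [hlin j hj]
          refine (norm_add_le _ _).trans ?_
          rw [norm_mul, norm_mul]
          apply add_le_add
          · apply mul_le_mul_of_nonneg_right _ (norm_nonneg _)
            norm_num
          · apply mul_le_mul_of_nonneg_right _ (norm_nonneg _)
            rw [norm_div]
            simp
      _ = (1/2) * (∑ j ∈ L, ‖(inner ℂ Ω (b (siteOp j S Ω)) : ℂ)
            - (inner ℂ Ω (siteOp j S Ω) : ℂ) * (inner ℂ Ω (b Ω) : ℂ)‖)
          + (1/2) * (∑ j ∈ L, ‖(inner ℂ Ω (b (siteOp j T Ω)) : ℂ)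
            - (inner ℂ Ω (siteOp j T Ω) : ℂ) * (inner ℂ Ω (b Ω) : ℂ)‖) := by
          rw [Finset.sum_add_distrib, Finset.mul_sum, Finset.mul_sum]
      _ ≤ (1/2) * (2 * Real.sqrt (8 * k * g * L.card / δE))
          + (1/2) * (2 * Real.sqrt (8 * k * g * L.card / δE)) := by
          apply add_le_add <;> apply mul_le_mul_of_nonneg_left _ (by norm_num : (0:ℝ) ≤ 1/2)
          · exact bS
          · exact bT
      _ = 2 * Real.sqrt (8 * k * g * L.card / δE) := by ring
  -- assemble
  calc ∑ j ∈ L, matOpNorm (Mmat j)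
      ≤ ∑ j ∈ L, ∑ q : Fin d × Fin d, ∑ q' : Fin d × Fin d, ‖Mmat j q q'‖ :=
        Finset.sum_le_sum fun j _ => matOpNorm_le_sum_abs (Mmat j)
    _ = ∑ q : Fin d × Fin d, ∑ q' : Fin d × Fin d, ∑ j ∈ L, ‖Mmat j q q'‖ := by
        rw [Finset.sum_comm]
        exact Finset.sum_congr rfl fun q _ => Finset.sum_comm
    _ ≤ ∑ q : Fin d × Fin d, ∑ q' : Fin d × Fin d,
          2 * Real.sqrt (8 * k * g * L.card / δE) := by
        exact Finset.sum_le_sum fun q _ => Finset.sum_le_sum fun q' _ => pair q q'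
    _ = ((d:ℝ)^2 * (d:ℝ)^2) * (2 * Real.sqrt (8 * k * g * L.card / δE)) := by
        rw [Finset.sum_const, Finset.sum_const, nsmul_eq_mul, nsmul_eq_mul]
        have : ((Finset.univ : Finset (Fin d × Fin d)).card : ℝ) = (d:ℝ)^2 := by
          rw [Finset.card_univ, Fintype.card_prod, Fintype.card_fin]
          push_cast
          ring
        rw [this]
        ring
    _ = (2 * (d:ℝ)^4 * Real.sqrt (8 * k * g)) * Real.sqrt (L.card / δE) := by
        have hsplit : Real.sqrt (8 * k * g * L.card / δE)
            = Real.sqrt (8 * k * g) * Real.sqrt (L.card / δE) := by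
          rw [← Real.sqrt_mul (by positivity)]
          congr 1
          ring
        rw [hsplit]
        ring
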